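/- Let r, r̄ : ℤ → ℝ³ be two nondegenerate discrete centroaffine space curves. Then there exists an invertible 3×3 real matrix A with r(k) = A·r̄(k) for all k ∈ ℤ (i.e. the curves are centroaffinely equivalent) if and only if at every k ∈ ℤ the two curves have the same first centroaffine curvature κ_k, the same second centroaffine curvature κ̄_k, and the same centroaffine torsion τ_k. -/

import Mathlib

/-- Determinant of the 3×3 matrix with columns `u`, `v`, `w`. -/
noncomputable def det3 (u v w : Fin 3 → ℝ) : ℝ := (Matrix.of ![u, v, w]).det

/-- Edge tangent vector of a discrete space curve. -/
def tang3 (r : ℤ → Fin 3 → ℝ) (k : ℤ) : Fin 3 → ℝ := r (k + 1) - r k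

/-- Nondegeneracy of a discrete centroaffine space curve. -/
def Nondeg3 (r : ℤ → Fin 3 → ℝ) : Prop :=
  ∀ k : ℤ, det3 (r (k - 1)) (r k) (r (k + 1)) ≠ 0

/-- First centroaffine curvature. -/
noncomputable def kappa3 (r : ℤ → Fin 3 → ℝ) (k : ℤ) : ℝ :=
  det3 (r k) (r (k + 1)) (r (k + 2)) / det3 (r (k - 1)) (r k) (r (k + 1))

/-- Second centroaffine curvature. -/
noncomputable def kbar3 (r : ℤ → Fin 3 → ℝ) (k : ℤ) : ℝ :=
  det3 (r (k + 1)) (tang3 r (k - 1)) (tang3 r (k + 1)) /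
    det3 (r k) (tang3 r (k - 1)) (tang3 r k)

/-- Centroaffine torsion. -/
noncomputable def tau3 (r : ℤ → Fin 3 → ℝ) (k : ℤ) : ℝ :=
  det3 (tang3 r (k - 1)) (tang3 r k) (tang3 r (k + 1)) /
    det3 (r (k - 1)) (r k) (r (k + 1))

private lemma det3_expand (u v w : Fin 3 → ℝ) :
    det3 u v w = u 0 * (v 1 * w 2) - u 0 * (v 2 * w 1) - u 1 * (v 0 * w 2)
      + u 1 * (v 2 * w 0) + u 2 * (v 0 * w 1) - u 2 * (v 1 * w 0) := by
  simp [det3, Matrix.det_fin_three]; ring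

private lemma det3_mulVec (A : Matrix (Fin 3) (Fin 3) ℝ) (u v w : Fin 3 → ℝ) :
    det3 (A.mulVec u) (A.mulVec v) (A.mulVec w) = A.det * det3 u v w := by
  simp [det3_expand, Matrix.det_fin_three, Matrix.mulVec, dotProduct,
    Fin.sum_univ_three]; ring

private lemma cramer3 (e1 e2 e3 y : Fin 3 → ℝ) :
    det3 e1 e2 e3 • y = det3 y e2 e3 • e1 + det3 e1 y e3 • e2 + det3 e1 e2 y • e3 := by
  funext j
  fin_cases j <;> · simp [det3_expand]; ring

private lemma kappa3_ne_zero {r : ℤ → Fin 3 → ℝ} (hr : Nondeg3 r) (k : ℤ) :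
    kappa3 r k ≠ 0 := by
  have h1 := hr (k + 1)
  have e1 : k + 1 - 1 = k := by ring
  have e2 : k + 1 + 1 = k + 2 := by ring
  rw [e1, e2] at h1
  exact div_ne_zero h1 (hr k)

/-- The fundamental linear recurrence of a nondegenerate discrete centroaffine curve. -/
private lemma recur3 {r : ℤ → Fin 3 → ℝ} (hr : Nondeg3 r) (k : ℤ) :
    r (k + 2) = kappa3 r k • r (k - 1) + (-(kappa3 r k) - kbar3 r k) • r k
      + (1 + tau3 r k + kbar3 r k) • r (k + 1) := by
  have hD : det3 (r (k - 1)) (r k) (r (k + 1)) ≠ 0 := hr k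
  have ta : tang3 r (k - 1) = r k - r (k - 1) := by
    have : k - 1 + 1 = k := by ring
    rw [tang3, this]
  have tb : tang3 r k = r (k + 1) - r k := rfl
  have tc : tang3 r (k + 1) = r (k + 2) - r (k + 1) := by
    have : k + 1 + 1 = k + 2 := by ring
    rw [tang3, this]
  set a := r (k - 1) with ha
  set b := r k with hb
  set c := r (k + 1) with hc
  set d := r (k + 2) with hd
  set D := det3 a b c with hDdef
  have hbcd : det3 b c d = kappa3 r k * D := by
    rw [kappa3]; field_simp
    exact (mul_div_cancel_right₀ _ hD).symm
  have hden : det3 b (b - a) (c - b) = D := by simp [det3_expand, hDdef]; ring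
  have hnum : det3 c (b - a) (d - c) = det3 a c d - det3 b c d := by
    simp [det3_expand]; ring
  have hkbar : kbar3 r k * D = det3 a c d - det3 b c d := by
    rw [kbar3, ta, tb, tc, hden, hnum, div_mul_cancel₀]
    rw [hden] at *; exact hD
  have hacd : det3 a c d = (kappa3 r k + kbar3 r k) * D := by
    rw [hbcd] at hkbar; linarith [hkbar]
  have htnum : det3 (b - a) (c - b) (d - c) =
      det3 b c d - det3 a c d + det3 a b d - det3 a b c := by
    simp [det3_expand]; ring
  have htau : tau3 r k * D = det3 b c d - det3 a c d + det3 a b d - D := by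
    rw [tau3, ta, tb, tc, htnum, div_mul_cancel₀ _ hD]
  have habd : det3 a b d = (1 + tau3 r k + kbar3 r k) * D := by
    rw [hbcd, hacd] at htau; linarith [htau]
  have hcr := cramer3 a b c d
  have hdbc : det3 d b c = det3 b c d := by simp [det3_expand]; ring
  have hadc : det3 a d c = -(det3 a c d) := by simp [det3_expand]; ring
  rw [hdbc, hadc, hbcd, hacd, habd] at hcr
  have key : D • d = D • (kappa3 r k • a + (-(kappa3 r k) - kbar3 r k) • b
      + (1 + tau3 r k + kbar3 r k) • c) := by
    rw [hcr]; funext j; simp; ring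
  exact smul_right_injective (Fin 3 → ℝ) hD key

private lemma exists_base (r rb : ℤ → Fin 3 → ℝ) (hM : det3 (r (-1)) (r 0) (r 1) ≠ 0)
    (hN : det3 (rb (-1)) (rb 0) (rb 1) ≠ 0) :
    ∃ A : Matrix (Fin 3) (Fin 3) ℝ, A.det ≠ 0 ∧ A.mulVec (rb (-1)) = r (-1) ∧
      A.mulVec (rb 0) = r 0 ∧ A.mulVec (rb 1) = r 1 := by
  set M : Matrix (Fin 3) (Fin 3) ℝ := Matrix.of (fun i j => ![r (-1), r 0, r 1] j i) with hMdef
  set N : Matrix (Fin 3) (Fin 3) ℝ := Matrix.of (fun i j => ![rb (-1), rb 0, rb 1] j i) with hNdef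
  have hdM : M.det = det3 (r (-1)) (r 0) (r 1) := by
    rw [show M = (Matrix.of ![r (-1), r 0, r 1]).transpose from rfl, Matrix.det_transpose]; rfl
  have hdN : N.det = det3 (rb (-1)) (rb 0) (rb 1) := by
    rw [show N = (Matrix.of ![rb (-1), rb 0, rb 1]).transpose from rfl, Matrix.det_transpose]; rfl
  have hNu : IsUnit N.det := by rw [hdN]; exact Ne.isUnit hN
  have key : ∀ (e : Fin 3 → ℝ), (M * N⁻¹).mulVec (N.mulVec e) = M.mulVec e := by
    intro e
    rw [Matrix.mulVec_mulVec, Matrix.mul_assoc, Matrix.nonsing_inv_mul N hNu, Matrix.mul_one]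
  refine ⟨M * N⁻¹, ?_, ?_, ?_, ?_⟩
  · rw [Matrix.det_mul, Matrix.det_nonsing_inv, hdM, hdN, Ring.inverse_eq_inv]
    exact mul_ne_zero hM (inv_ne_zero hN)
  · have h1 : rb (-1) = N.mulVec ![1,0,0] := by
      funext j; fin_cases j <;>
        simp [hNdef, Matrix.mulVec, dotProduct, Fin.sum_univ_three]
    have h2 : r (-1) = M.mulVec ![1,0,0] := by
      funext j; fin_cases j <;>
        simp [hMdef, Matrix.mulVec, dotProduct, Fin.sum_univ_three]
    rw [h1, key, ← h2]
  · have h1 : rb 0 = N.mulVec ![0,1,0] := by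
      funext j; fin_cases j <;>
        simp [hNdef, Matrix.mulVec, dotProduct, Fin.sum_univ_three]
    have h2 : r 0 = M.mulVec ![0,1,0] := by
      funext j; fin_cases j <;>
        simp [hMdef, Matrix.mulVec, dotProduct, Fin.sum_univ_three]
    rw [h1, key, ← h2]
  · have h1 : rb 1 = N.mulVec ![0,0,1] := by
      funext j; fin_cases j <;>
        simp [hNdef, Matrix.mulVec, dotProduct, Fin.sum_univ_three]
    have h2 : r 1 = M.mulVec ![0,0,1] := by
      funext j; fin_cases j <;>
        simp [hMdef, Matrix.mulVec, dotProduct, Fin.sum_univ_three]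
    rw [h1, key, ← h2]

/-- Two nondegenerate discrete centroaffine space curves are centroaffinely equivalent
iff they have the same centroaffine curvatures and torsions at every point. -/
theorem stmt_7 (r rb : ℤ → Fin 3 → ℝ) (hr : Nondeg3 r) (hrb : Nondeg3 rb) :
    (∃ A : Matrix (Fin 3) (Fin 3) ℝ, A.det ≠ 0 ∧ ∀ k : ℤ, r k = A.mulVec (rb k)) ↔
      ∀ k : ℤ, kappa3 r k = kappa3 rb k ∧ kbar3 r k = kbar3 rb k ∧
        tau3 r k = tau3 rb k := by
  constructor
  · rintro ⟨A, hdet, hA⟩ k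
    have hAt : ∀ m : ℤ, tang3 r m = A.mulVec (tang3 rb m) := by
      intro m
      rw [tang3, tang3, hA, hA, ← Matrix.mulVec_sub]
    refine ⟨?_, ?_, ?_⟩ <;>
      simp only [kappa3, kbar3, tau3, hA, hAt, det3_mulVec] <;>
      rw [mul_div_mul_left _ _ hdet]
  · intro hinv
    have hM := hr 0
    have hN := hrb 0
    norm_num at hM hN
    obtain ⟨A, hdet, hb1, hb0, hb2⟩ := exists_base r rb hM hN
    set P : ℤ → Prop := fun n =>
      (r (n - 1) = A.mulVec (rb (n - 1))) ∧ (r n = A.mulVec (rb n)) ∧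
        (r (n + 1) = A.mulVec (rb (n + 1))) with hP
    have hall : ∀ n : ℤ, P n := by
      intro n
      induction n using Int.induction_on with
      | zero =>
        refine ⟨?_, hb0.symm, ?_⟩
        · rw [show (0:ℤ) - 1 = -1 by norm_num]; exact hb1.symm
        · rw [show (0:ℤ) + 1 = 1 by norm_num]; exact hb2.symm
      | succ i ih =>
        obtain ⟨ih1, ih2, ih3⟩ := ih
        refine ⟨?_, ih3, ?_⟩
        · rw [show (i:ℤ) + 1 - 1 = i by ring]; exact ih2
        · rw [show (i:ℤ) + 1 + 1 = i + 2 by ring]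
          obtain ⟨hk, hkb, ht⟩ := hinv i
          have h1 := recur3 hr (i : ℤ)
          have h2 := recur3 hrb (i : ℤ)
          rw [← hk, ← hkb, ← ht] at h2
          rw [ih1, ih2, ih3] at h1
          rw [h2]
          simp only [Matrix.mulVec_add, Matrix.mulVec_smul]
          exact h1
      | pred i ih =>
        obtain ⟨ih1, ih2, ih3⟩ := ih
        refine ⟨?_, ih1, ?_⟩
        · obtain ⟨hk, hkb, ht⟩ := hinv (-(i:ℤ) - 1)
          have h1 := recur3 hr (-(i:ℤ) - 1)
          have h2 := recur3 hrb (-(i:ℤ) - 1)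
          rw [← hk, ← hkb, ← ht] at h2
          rw [show -(i:ℤ) - 1 + 2 = -(i:ℤ) + 1 by ring,
            show -(i:ℤ) - 1 + 1 = -(i:ℤ) by ring] at h1 h2
          rw [ih3, ih1, ih2] at h1
          have h2' := congrArg A.mulVec h2
          simp only [Matrix.mulVec_add, Matrix.mulVec_smul] at h2'
          have hcomb := h1.symm.trans h2'
          have step1 := add_right_cancel hcomb
          have step2 := add_right_cancel step1
          exact smul_right_injective (Fin 3 → ℝ) (kappa3_ne_zero hr (-(i:ℤ) - 1)) step2
        · rw [show -(i:ℤ) - 1 + 1 = -(i:ℤ) by ring]; exact ih2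
    exact ⟨A, hdet, fun k => (hall k).2.1⟩
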